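/- Let 𝒞 be a treeset on a set X. Then the graph (V_𝒞, T_𝒞) is a tree, i.e., it is connected and acyclic. -/

import Mathlib

open Set

/-- A family of sets is *nested* if for any two members, one of the four
intersections of the sets or their complements is empty. -/
def Nested {X : Type*} (𝒞 : Set (Set X)) : Prop :=
  ∀ C ∈ 𝒞, ∀ D ∈ 𝒞, C ∩ D = ∅ ∨ C ∩ Dᶜ = ∅ ∨ Cᶜ ∩ D = ∅ ∨ Cᶜ ∩ Dᶜ = ∅

/-- A *treeset* on `X`: a family of nonempty proper subsets of `X` that is nested,
closed under complementation and finitely separating. -/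
def Treeset {X : Type*} (𝒞 : Set (Set X)) : Prop :=
  (∀ C ∈ 𝒞, C.Nonempty ∧ C ≠ Set.univ) ∧
  Nested 𝒞 ∧
  (∀ C ∈ 𝒞, Cᶜ ∈ 𝒞) ∧
  (∀ x y : X, {C | C ∈ 𝒞 ∧ x ∈ C ∧ y ∉ C}.Finite)

/-- The vertices `V_𝒞` of the structure tree: subsets `u ⊆ 𝒞` satisfying (U1)–(U3). -/
def IsVertex {X : Type*} (𝒞 : Set (Set X)) (u : Set (Set X)) : Prop :=
  u ⊆ 𝒞 ∧
  (∀ C ∈ 𝒞, Xor' (C ∈ u) (Cᶜ ∈ u)) ∧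
  (∀ C ∈ u, ∀ D ∈ 𝒞, C ⊆ D → D ∈ u) ∧
  ¬ ∃ f : ℕ → Set X, (∀ n, f n ∈ u) ∧ ∀ n, f (n + 1) ⊂ f n

/-- A *walk* of length `n` in the (directed presentation of the) edge set `E`. -/
def IsWalk {α : Type*} (E : Set (α × α)) (f : ℕ → α) (n : ℕ) : Prop :=
  ∀ i < n, (f i, f (i + 1)) ∈ E

/-- Two points are joined by an `E`-path. -/
def Reach {α : Type*} (E : Set (α × α)) (x y : α) : Prop :=
  ∃ (n : ℕ) (f : ℕ → α), f 0 = x ∧ f n = y ∧ IsWalk E f n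

/-- The extended path metric `d_E` of a graph, with values in `ℕ∞` (`∞` if no path exists). -/
noncomputable def graphDist {α : Type*} (E : Set (α × α)) (x y : α) : ℕ∞ :=
  sInf {d : ℕ∞ | ∃ (n : ℕ) (f : ℕ → α), d = (n : ℕ∞) ∧ f 0 = x ∧ f n = y ∧ IsWalk E f n}

/-- A graph is *acyclic* if it has no injective cycle (of length at least 3,
i.e. not doubling back along a single edge). -/
def Acyclic {α : Type*} (E : Set (α × α)) : Prop :=
  ¬ ∃ (f : ℕ → α) (n : ℕ), 3 ≤ n ∧ IsWalk E f n ∧ f n = f 0 ∧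
      ∀ i j, i < n → j < n → f i = f j → i = j

/-- The edge set `T_𝒞` of the structure tree on `V_𝒞`. -/
def TEdges {X : Type*} (𝒞 : Set (Set X)) : Set (Set (Set X) × Set (Set X)) :=
  {p | IsVertex 𝒞 p.1 ∧ IsVertex 𝒞 p.2 ∧ ∃ C, p.1 \ p.2 = {C}}
section Aux

variable {X : Type*} {𝒞 : Set (Set X)} {u v w z : Set (Set X)} {C D : Set X}

lemma ts_compl_mem (h𝒞 : Treeset 𝒞) (hC : C ∈ 𝒞) : Cᶜ ∈ 𝒞 := h𝒞.2.2.1 C hC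

lemma ts_ne_compl (h𝒞 : Treeset 𝒞) (hC : C ∈ 𝒞) : C ≠ Cᶜ := by
  obtain ⟨x, hx⟩ := (h𝒞.1 C hC).1
  intro h
  have hx' : x ∈ Cᶜ := h ▸ hx
  exact hx' hx

lemma vx_compl_mem (hu : IsVertex 𝒞 u) (hC : C ∈ 𝒞) (h : C ∉ u) : Cᶜ ∈ u := by
  rcases hu.2.1 C hC with ⟨h1, _⟩ | ⟨h1, _⟩
  · exact absurd h1 h
  · exact h1

lemma vx_compl_not_mem (hu : IsVertex 𝒞 u) (h : C ∈ u) : Cᶜ ∉ u := by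
  rcases hu.2.1 C (hu.1 h) with ⟨_, h2⟩ | ⟨_, h2⟩
  · exact h2
  · exact absurd h h2

lemma vx_mem_of_compl_not_mem (hu : IsVertex 𝒞 u) (hC : C ∈ 𝒞) (h : Cᶜ ∉ u) : C ∈ u := by
  rcases hu.2.1 C hC with ⟨h1, _⟩ | ⟨h1, _⟩
  · exact h1
  · exact absurd h1 h

lemma vx_inter_ne (h𝒞 : Treeset 𝒞) (hu : IsVertex 𝒞 u) (hC : C ∈ u) (hD : D ∈ u) :
    C ∩ D ≠ ∅ := by
  intro h
  have hsub : C ⊆ Dᶜ := by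
    intro x hx
    intro hxD
    exact (Set.eq_empty_iff_forall_notMem.mp h) x ⟨hx, hxD⟩
  have : Dᶜ ∈ u := hu.2.2.1 C hC Dᶜ (ts_compl_mem h𝒞 (hu.1 hD)) hsub
  exact vx_compl_not_mem hu hD this

lemma vx_eq_of_diff_empty (hu : IsVertex 𝒞 u) (hv : IsVertex 𝒞 v) (h : u \ v = ∅) : u = v := by
  apply Set.Subset.antisymm
  · intro D hD
    by_contra hDv
    exact (Set.eq_empty_iff_forall_notMem.mp h) D ⟨hD, hDv⟩
  · intro D hDv
    by_contra hDu
    have h1 : Dᶜ ∈ u := vx_compl_mem hu (hv.1 hDv) hDu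
    have h2 : Dᶜ ∉ v := vx_compl_not_mem hv hDv
    exact (Set.eq_empty_iff_forall_notMem.mp h) Dᶜ ⟨h1, h2⟩

lemma edge_facts (hu : IsVertex 𝒞 u) (hw : IsVertex 𝒞 w) (h : u \ w = {C}) :
    C ∈ u ∧ C ∉ w ∧ Cᶜ ∈ w ∧ Cᶜ ∉ u ∧ w \ u = {Cᶜ} := by
  have hCuw : C ∈ u \ w := by rw [h]; rfl
  have hCu : C ∈ u := hCuw.1
  have hCw : C ∉ w := hCuw.2
  have hccw : Cᶜ ∈ w := vx_compl_mem hw (hu.1 hCu) hCw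
  have hccu : Cᶜ ∉ u := vx_compl_not_mem hu hCu
  refine ⟨hCu, hCw, hccw, hccu, ?_⟩
  ext D
  simp only [Set.mem_diff, Set.mem_singleton_iff]
  constructor
  · rintro ⟨hDw, hDu⟩
    have h1 : Dᶜ ∈ u := vx_compl_mem hu (hw.1 hDw) hDu
    have h2 : Dᶜ ∉ w := vx_compl_not_mem hw hDw
    have h3 : Dᶜ ∈ u \ w := ⟨h1, h2⟩
    rw [h, Set.mem_singleton_iff] at h3
    rw [← h3, compl_compl]
  · rintro rfl
    exact ⟨hccw, hccu⟩

lemma edge_eq (hu : IsVertex 𝒞 u) (hw : IsVertex 𝒞 w) (h : u \ w = {C}) :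
    w = insert Cᶜ (u \ {C}) := by
  obtain ⟨hCu, hCw, hccw, hccu, hwu⟩ := edge_facts hu hw h
  ext D
  simp only [Set.mem_insert_iff, Set.mem_diff, Set.mem_singleton_iff]
  constructor
  · intro hDw
    by_cases hDu : D ∈ u
    · exact Or.inr ⟨hDu, fun hDC => hCw (hDC ▸ hDw)⟩
    · left
      have h3 : D ∈ w \ u := ⟨hDw, hDu⟩
      rw [hwu, Set.mem_singleton_iff] at h3
      exact h3
  · rintro (rfl | ⟨hDu, hDC⟩)
    · exact hccw
    · by_contra hDw
      have h3 : D ∈ u \ w := ⟨hDu, hDw⟩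
      rw [h, Set.mem_singleton_iff] at h3
      exact hDC h3

lemma step_ssubset (h𝒞 : Treeset 𝒞) (hu : IsVertex 𝒞 u) (hw : IsVertex 𝒞 w)
    (hz : IsVertex 𝒞 z) (h1 : u \ w = {C}) (h2 : w \ z = {D}) (hzu : z ≠ u) : C ⊂ D := by
  obtain ⟨hCu, hCw, hCcw, hCcu, hwu⟩ := edge_facts hu hw h1
  obtain ⟨hDw, hDz, hDcz, hDcw, hzw⟩ := edge_facts hw hz h2
  have hDCc : D ≠ Cᶜ := by
    intro hDC
    apply hzu
    have e1 : z = insert Dᶜ (w \ {D}) := edge_eq hw hz h2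
    have e2 : u = insert Cᶜᶜ (w \ {Cᶜ}) := edge_eq hw hu hwu
    rw [e1, e2, hDC, compl_compl]
  have hCD : C ≠ D := fun hcd => hCw (hcd ▸ hDw)
  have hDu : D ∈ u := by
    by_contra hD
    have h3 : D ∈ w \ u := ⟨hDw, hD⟩
    rw [hwu, Set.mem_singleton_iff] at h3
    exact hDCc h3
  have hCcz : Cᶜ ∈ z := by
    by_contra hcz
    have h3 : Cᶜ ∈ w \ z := ⟨hCcw, hcz⟩
    rw [h2, Set.mem_singleton_iff] at h3
    exact hDCc h3.symm
  have n1 : C ∩ D ≠ ∅ := vx_inter_ne h𝒞 hu hCu hDu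
  have n3 : Cᶜ ∩ D ≠ ∅ := vx_inter_ne h𝒞 hw hCcw hDw
  have n4 : Cᶜ ∩ Dᶜ ≠ ∅ := vx_inter_ne h𝒞 hz hCcz hDcz
  rcases h𝒞.2.1 C (hu.1 hCu) D (hu.1 hDu) with h | h | h | h
  · exact absurd h n1
  · have hsub : C ⊆ D := by
      intro x hx
      by_contra hxD
      exact (Set.eq_empty_iff_forall_notMem.mp h) x ⟨hx, hxD⟩
    exact ⟨hsub, fun hsub2 => hCD (Set.Subset.antisymm hsub hsub2)⟩
  · exact absurd h n3
  · exact absurd h n4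

lemma diff_chain (h𝒞 : Treeset 𝒞) (hu : IsVertex 𝒞 u) (hv : IsVertex 𝒞 v) :
    IsChain (· ⊆ ·) (u \ v) := by
  intro C hC D hD _hne
  have hCcv : Cᶜ ∈ v := vx_compl_mem hv (hu.1 hC.1) hC.2
  have hDcv : Dᶜ ∈ v := vx_compl_mem hv (hu.1 hD.1) hD.2
  rcases h𝒞.2.1 C (hu.1 hC.1) D (hu.1 hD.1) with h | h | h | h
  · exact absurd h (vx_inter_ne h𝒞 hu hC.1 hD.1)
  · left
    intro x hx
    by_contra hxD
    exact (Set.eq_empty_iff_forall_notMem.mp h) x ⟨hx, hxD⟩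
  · right
    intro x hx
    by_contra hxC
    exact (Set.eq_empty_iff_forall_notMem.mp h) x ⟨hxC, hx⟩
  · exact absurd h (vx_inter_ne h𝒞 hv hCcv hDcv)

end Aux

section ChainFinite

lemma chain_finite_of_no_mono_seq {β : Type*} {s : Set (Set β)} (hc : IsChain (· ⊆ ·) s)
    (hdec : ¬ ∃ f : ℕ → Set β, (∀ n, f n ∈ s) ∧ ∀ n, f (n + 1) ⊂ f n)
    (hinc : ¬ ∃ f : ℕ → Set β, (∀ n, f n ∈ s) ∧ ∀ n, f n ⊂ f (n + 1)) : s.Finite := by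
  rcases s.eq_empty_or_nonempty with rfl | ⟨x0, hx0⟩
  · simp
  haveI : Nonempty ↥s := ⟨⟨x0, hx0⟩⟩
  have htot : ∀ a b : ↥s, a ≤ b ∨ b ≤ a := by
    intro a b
    rcases eq_or_ne a b with rfl | hne
    · exact Or.inl le_rfl
    · rcases hc a.2 b.2 (fun hh => hne (Subtype.ext hh)) with h | h
      · exact Or.inl h
      · exact Or.inr h
  haveI wflt : WellFoundedLT ↥s := by
    constructor
    rw [RelEmbedding.wellFounded_iff_isEmpty]
    constructor
    intro g
    apply hdec
    refine ⟨fun n => (g n : Set β), fun n => (g n).2, fun n => ?_⟩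
    have hlt : g (n + 1) < g n := g.map_rel_iff.2 (Nat.lt_succ_self n)
    exact Set.lt_iff_ssubset.mp (Subtype.coe_lt_coe.mpr hlt)
  haveI wfgt : WellFoundedGT ↥s := by
    constructor
    rw [RelEmbedding.wellFounded_iff_isEmpty]
    constructor
    intro g
    apply hinc
    refine ⟨fun n => (g n : Set β), fun n => (g n).2, fun n => ?_⟩
    have hlt : g n < g (n + 1) := g.map_rel_iff.2 (Nat.lt_succ_self n)
    exact Set.lt_iff_ssubset.mp (Subtype.coe_lt_coe.mpr hlt)
  obtain ⟨a, ha0, n, han, hcov⟩ := exists_covBy_seq_of_wellFoundedLT_wellFoundedGT ↥s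
  have hsub : s ⊆ (fun i => (a i : Set β)) '' (Set.Iic n) := by
    intro x hx
    classical
    set P : ℕ → Prop := fun i => a i ≤ ⟨x, hx⟩ with hP
    have hP0 : P 0 := by
      rcases htot (a 0) ⟨x, hx⟩ with h | h
      · exact h
      · exact ha0 h
    set i := Nat.findGreatest P n with hi
    have hPi : P i := Nat.findGreatest_spec (Nat.zero_le n) hP0
    have hin : i ≤ n := Nat.findGreatest_le n
    rcases eq_or_lt_of_le hin with heq | hlt
    · have h1 : a i ≤ (⟨x, hx⟩ : ↥s) := hPi
      have h1' : a n ≤ (⟨x, hx⟩ : ↥s) := by rw [← heq]; exact h1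
      have h2 : (⟨x, hx⟩ : ↥s) ≤ a i := by rw [heq]; exact han h1'
      have hxa : a i = (⟨x, hx⟩ : ↥s) := le_antisymm h1 h2
      exact ⟨i, hin, congrArg Subtype.val hxa⟩
    · have hnP : ¬ P (i + 1) :=
        Nat.findGreatest_is_greatest (Nat.lt_succ_self i) (by omega)
      have hxlt : (⟨x, hx⟩ : ↥s) < a (i + 1) := by
        rcases htot (a (i + 1)) ⟨x, hx⟩ with h | h
        · exact absurd h hnP
        · exact lt_of_le_of_ne h (fun hh => hnP (le_of_eq hh.symm))
      have hcovi := hcov i hlt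
      rcases lt_or_eq_of_le hPi with h | h
      · exact absurd hxlt (hcovi.2 h)
      · exact ⟨i, hin, congrArg Subtype.val h⟩
  exact ((Set.finite_Iic n).image _).subset hsub

end ChainFinite

section Aux2

variable {X : Type*} {𝒞 : Set (Set X)} {u v w z : Set (Set X)} {C D : Set X}

lemma diff_finite (h𝒞 : Treeset 𝒞) (hu : IsVertex 𝒞 u) (hv : IsVertex 𝒞 v) :
    (u \ v).Finite := by
  apply chain_finite_of_no_mono_seq (diff_chain h𝒞 hu hv)
  · rintro ⟨f, hf, hdec⟩
    exact hu.2.2.2 ⟨f, fun n => (hf n).1, hdec⟩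
  · rintro ⟨f, hf, hinc⟩
    apply hv.2.2.2
    refine ⟨fun n => (f n)ᶜ, fun n => vx_compl_mem hv (hu.1 (hf n).1) (hf n).2, fun n => ?_⟩
    have h1 := hinc n
    rw [Set.ssubset_def] at h1
    show (f (n + 1))ᶜ ⊂ (f n)ᶜ
    rw [Set.ssubset_def]
    exact ⟨Set.compl_subset_compl.mpr h1.1,
      fun hh => h1.2 (Set.compl_subset_compl.mp hh)⟩

lemma flip_vertex (h𝒞 : Treeset 𝒞) (hu : IsVertex 𝒞 u) (hCu : C ∈ u)
    (hmin : ∀ D ∈ u, D ⊆ C → D = C) :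
    IsVertex 𝒞 (insert Cᶜ (u \ {C})) ∧ u \ insert Cᶜ (u \ {C}) = {C} := by
  have hC𝒞 : C ∈ 𝒞 := hu.1 hCu
  have hCc𝒞 : Cᶜ ∈ 𝒞 := ts_compl_mem h𝒞 hC𝒞
  have hCne : C ≠ Cᶜ := ts_ne_compl h𝒞 hC𝒞
  have hCcu : Cᶜ ∉ u := vx_compl_not_mem hu hCu
  set u' := insert Cᶜ (u \ {C}) with hu'def
  have hmem : ∀ D, D ∈ u' ↔ D = Cᶜ ∨ (D ∈ u ∧ D ≠ C) := by
    intro D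
    simp only [hu'def, Set.mem_insert_iff, Set.mem_diff, Set.mem_singleton_iff]
  have hCnotu' : C ∉ u' := by
    rw [hmem]
    rintro (h | ⟨_, h⟩)
    · exact hCne h
    · exact h rfl
  have hCcu' : Cᶜ ∈ u' := by rw [hmem]; exact Or.inl rfl
  constructor
  · refine ⟨?_, ?_, ?_, ?_⟩
    · intro D hD
      rcases (hmem D).mp hD with rfl | ⟨hDu, _⟩
      · exact hCc𝒞
      · exact hu.1 hDu
    · intro D hD𝒞
      by_cases h1 : D = C
      · subst h1
        exact Or.inr ⟨hCcu', hCnotu'⟩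
      by_cases h2 : D = Cᶜ
      · subst h2
        refine Or.inl ⟨hCcu', ?_⟩
        rw [compl_compl]
        exact hCnotu'
      · have hDcC : Dᶜ ≠ C := fun hh => h2 (by rw [← hh, compl_compl])
        have hDcCc : Dᶜ ≠ Cᶜ := fun hh => h1 (compl_injective hh)
        rcases hu.2.1 D hD𝒞 with ⟨ha, hb⟩ | ⟨ha, hb⟩
        · refine Or.inl ⟨(hmem D).mpr (Or.inr ⟨ha, h1⟩), ?_⟩
          rw [hmem]
          rintro (hh | ⟨hh, _⟩)
          · exact hDcCc hh
          · exact hb hh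
        · refine Or.inr ⟨(hmem Dᶜ).mpr (Or.inr ⟨ha, hDcC⟩), ?_⟩
          rw [hmem]
          rintro (hh | ⟨hh, _⟩)
          · exact h2 hh
          · exact hb hh
    · intro D hD E hE𝒞 hDE
      rcases (hmem D).mp hD with rfl | ⟨hDu, hDC⟩
      · have hEcC : Eᶜ ⊆ C := Set.compl_subset_comm.mp hDE
        by_cases hEu : Eᶜ ∈ u
        · have hEC : Eᶜ = C := hmin Eᶜ hEu hEcC
          have : E = Cᶜ := by rw [← hEC, compl_compl]
          rw [this]
          exact hCcu'
        · have hEu' : E ∈ u := vx_mem_of_compl_not_mem hu hE𝒞 hEu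
          have hEC : E ≠ C := by
            rintro rfl
            obtain ⟨x, hx⟩ := Set.nonempty_compl.mpr (h𝒞.1 E hE𝒞).2
            exact hx (hDE hx)
          exact (hmem E).mpr (Or.inr ⟨hEu', hEC⟩)
      · have hEu : E ∈ u := hu.2.2.1 D hDu E hE𝒞 hDE
        have hEC : E ≠ C := by
          rintro rfl
          exact hDC (hmin D hDu hDE)
        exact (hmem E).mpr (Or.inr ⟨hEu, hEC⟩)
    · rintro ⟨f, hf, hdec⟩
      by_cases hex : ∃ m, f m = Cᶜ
      · obtain ⟨m, hm⟩ := hex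
        have hlt : ∀ k, f (m + 1 + k) ⊂ f m := by
          intro k
          induction k with
          | zero => exact hdec m
          | succ k ih => exact (hdec (m + 1 + k)).trans ih
        apply hu.2.2.2
        refine ⟨fun k => f (m + 1 + k), fun k => ?_, fun k => hdec (m + 1 + k)⟩
        rcases (hmem _).mp (hf (m + 1 + k)) with heq | ⟨h1, _⟩
        · have hk := hlt k
          rw [heq, hm] at hk
          exact absurd hk (ssubset_irrefl _)
        · exact h1
      · push_neg at hex
        apply hu.2.2.2
        refine ⟨f, fun k => ?_, hdec⟩
        rcases (hmem _).mp (hf k) with heq | ⟨h1, _⟩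
        · exact absurd heq (hex k)
        · exact h1
  · ext D
    simp only [Set.mem_diff, Set.mem_singleton_iff]
    constructor
    · rintro ⟨hDu, hDu'⟩
      by_contra hDC
      exact hDu' ((hmem D).mpr (Or.inr ⟨hDu, hDC⟩))
    · rintro rfl
      exact ⟨hCu, hCnotu'⟩

end Aux2

section Main

variable {X : Type*} {𝒞 : Set (Set X)}

lemma reach_of_card (h𝒞 : Treeset 𝒞) :
    ∀ k, ∀ u v : Set (Set X), IsVertex 𝒞 u → IsVertex 𝒞 v → (u \ v).ncard ≤ k →
      ∃ (n : ℕ) (f : ℕ → Set (Set X)), f 0 = u ∧ f n = v ∧ IsWalk (TEdges 𝒞) f n := by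
  intro k
  induction k with
  | zero =>
    intro u v hu hv hcard
    have hfin := diff_finite h𝒞 hu hv
    have hempty : u \ v = ∅ := (Set.ncard_eq_zero hfin).mp (Nat.le_zero.mp hcard)
    have heq := vx_eq_of_diff_empty hu hv hempty
    exact ⟨0, fun _ => u, rfl, heq, fun i hi => absurd hi (Nat.not_lt_zero i)⟩
  | succ k ih =>
    intro u v hu hv hcard
    by_cases huv : u = v
    · exact ⟨0, fun _ => u, rfl, huv, fun i hi => absurd hi (Nat.not_lt_zero i)⟩
    have hfin := diff_finite h𝒞 hu hv
    have hne : (u \ v).Nonempty := by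
      rcases Set.eq_empty_or_nonempty (u \ v) with h | h
      · exact absurd (vx_eq_of_diff_empty hu hv h) huv
      · exact h
    obtain ⟨C, hCmem, hCmin⟩ : ∃ C ∈ u \ v, ∀ D ∈ u \ v, id D ≤ id C → id C = id D := by
      obtain ⟨C, hCmem, hCmin⟩ := Set.Finite.exists_minimalFor id _ hfin hne
      exact ⟨C, hCmem, fun D hD hDC => le_antisymm (hCmin hD hDC) hDC⟩
    have hminu : ∀ D ∈ u, D ⊆ C → D = C := by
      intro D hDu hDC
      by_cases hDv : D ∈ v
      · exfalso
        exact hCmem.2 (hv.2.2.1 D hDv C (hu.1 hCmem.1) hDC)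
      · exact (hCmin D ⟨hDu, hDv⟩ hDC).symm
    obtain ⟨hu', hdiff⟩ := flip_vertex h𝒞 hu hCmem.1 hminu
    set u'' := insert Cᶜ (u \ {C}) with hu''def
    have hu'v : u'' \ v = (u \ v) \ {C} := by
      ext D
      simp only [hu''def, Set.mem_diff, Set.mem_insert_iff, Set.mem_singleton_iff]
      constructor
      · rintro ⟨rfl | ⟨hDu, hDC⟩, hDv⟩
        · exact absurd (vx_compl_mem hv (hu.1 hCmem.1) hCmem.2) hDv
        · exact ⟨⟨hDu, hDv⟩, hDC⟩
      · rintro ⟨⟨hDu, hDv⟩, hDC⟩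
        exact ⟨Or.inr ⟨hDu, hDC⟩, hDv⟩
    have hcard' : (u'' \ v).ncard ≤ k := by
      rw [hu'v]
      have hlt := Set.ncard_diff_singleton_lt_of_mem hCmem hfin
      omega
    obtain ⟨n, f, hf0, hfn, hwalk⟩ := ih u'' v hu' hv hcard'
    refine ⟨n + 1, fun i => Nat.rec u (fun j _ => f j) i, rfl, hfn, ?_⟩
    intro i hi
    cases i with
    | zero =>
      refine ⟨hu, ?_, ⟨C, ?_⟩⟩
      · show IsVertex 𝒞 (f 0)
        rw [hf0]; exact hu'
      · show u \ f 0 = {C}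
        rw [hf0]; exact hdiff
    | succ j => exact hwalk j (by omega)

theorem structureTree_isTree' (h𝒞 : Treeset 𝒞) :
    (∀ u v : Set (Set X), IsVertex 𝒞 u → IsVertex 𝒞 v →
      ∃ (n : ℕ) (f : ℕ → Set (Set X)), f 0 = u ∧ f n = v ∧ IsWalk (TEdges 𝒞) f n) ∧
    Acyclic (TEdges 𝒞) := by
  constructor
  · intro u v hu hv
    exact reach_of_card h𝒞 (u \ v).ncard u v hu hv le_rfl
  · rintro ⟨f, n, hn3, hwalk, hcyc, hinj⟩
    have hvert : ∀ i ≤ n, IsVertex 𝒞 (f i) := by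
      intro i hi
      rcases lt_or_eq_of_le hi with h | h
      · exact (hwalk i h).1
      · rw [h, hcyc]
        exact (hwalk 0 (by omega)).1
    have hCex : ∀ i, i < n → ∃ D, f i \ f (i + 1) = {D} := fun i hi => (hwalk i hi).2.2
    choose! C hC using hCex
    have hstep : ∀ i, i + 1 < n → C i ⊂ C (i + 1) := by
      intro i hi
      refine step_ssubset h𝒞 (hvert i (by omega)) (hvert (i + 1) (by omega))
        (hvert (i + 2) (by omega)) (hC i (by omega)) (hC (i + 1) hi) ?_
      intro h
      rcases lt_or_eq_of_le (show i + 2 ≤ n by omega) with h2 | h2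
      · have := hinj (i + 2) i h2 (by omega) h
        omega
      · have h0 : f 0 = f i := by rw [← hcyc, ← h2, h]
        have := hinj 0 i (by omega) (by omega) h0
        omega
    have hwrap : C (n - 1) ⊂ C 0 := by
      have hCn : f (n - 1) \ f 0 = {C (n - 1)} := by
        have h1 := hC (n - 1) (by omega)
        have h2 : n - 1 + 1 = n := by omega
        rw [h2, hcyc] at h1
        exact h1
      refine step_ssubset h𝒞 (hvert (n - 1) (by omega)) (hvert 0 (by omega))
        (hvert 1 (by omega)) hCn (hC 0 (by omega)) ?_
      intro h
      have := hinj 1 (n - 1) (by omega) (by omega) h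
      omega
    have hmono : ∀ i, i < n → C 0 ⊆ C i := by
      intro i
      induction i with
      | zero => exact fun _ => subset_rfl
      | succ j ihj =>
        intro hj
        exact (ihj (by omega)).trans (hstep j hj).1
    exact ssubset_irrefl (C 0) (lt_of_le_of_lt (hmono (n - 1) (by omega)) hwrap)

end Main

/-- The graph `(V_𝒞, T_𝒞)` associated with a treeset `𝒞` is a tree:
any two vertices are joined by a `T_𝒞`-path, and `T_𝒞` is acyclic. -/
theorem structureTree_isTree {X : Type*} (𝒞 : Set (Set X)) (h𝒞 : Treeset 𝒞) :
    (∀ u v : Set (Set X), IsVertex 𝒞 u → IsVertex 𝒞 v →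
      ∃ (n : ℕ) (f : ℕ → Set (Set X)), f 0 = u ∧ f n = v ∧ IsWalk (TEdges 𝒞) f n) ∧
    Acyclic (TEdges 𝒞) := by
  exact structureTree_isTree' h𝒞
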